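/- Let G be a finite simple graph and let A and B be independent sets of G with |A| = |B| = s that are TJ-reconfigurable. Then the minimum length of a TAR(s)-reconfiguration sequence from A to B equals twice the minimum length of a TJ-reconfiguration sequence from A to B, i.e., dist_TAR(A,B) = 2·dist_TJ(A,B). -/

import Mathlib

variable {V : Type*} [DecidableEq V]

/-- `A` is an independent set of the graph `G`. -/
def IsIndep (G : SimpleGraph V) (A : Finset V) : Prop :=
  ∀ u ∈ A, ∀ v ∈ A, ¬G.Adj u v

/-- Two independent sets are TJ-adjacent (differ by one token jump). -/
def TJAdj (A B : Finset V) : Prop :=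
  A.card = B.card ∧ (A \ B).card = 1 ∧ (B \ A).card = 1

/-- There is a TJ-reconfiguration sequence of length `ℓ` from `A` to `B` in `G`. -/
def TJSeq (G : SimpleGraph V) (A B : Finset V) (ℓ : ℕ) : Prop :=
  ∃ ρ : ℕ → Finset V, ρ 0 = A ∧ ρ ℓ = B ∧ (∀ i ≤ ℓ, IsIndep G (ρ i)) ∧
    ∀ i < ℓ, TJAdj (ρ i) (ρ (i + 1))

/-- One TAR step: addition or removal of exactly one vertex. -/
def TARStep (A B : Finset V) : Prop :=
  (∃ v ∉ A, B = insert v A) ∨ (∃ v ∈ A, B = A.erase v)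

/-- `ρ 0, …, ρ r` is a TAR(k)-reconfiguration sequence from `A` to `B` in `G`: all its
members are independent sets of size at least `k - 1`, and consecutive members differ by
the addition or the removal of exactly one vertex. -/
def TARSeqFun (G : SimpleGraph V) (k : ℕ) (ρ : ℕ → Finset V) (r : ℕ)
    (A B : Finset V) : Prop :=
  ρ 0 = A ∧ ρ r = B ∧ (∀ i ≤ r, IsIndep G (ρ i) ∧ k - 1 ≤ (ρ i).card) ∧
    ∀ i < r, TARStep (ρ i) (ρ (i + 1))

/-- There is a TAR(k)-reconfiguration sequence of length `r` from `A` to `B` in `G`. -/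
def TARSeq (G : SimpleGraph V) (k : ℕ) (A B : Finset V) (r : ℕ) : Prop :=
  ∃ ρ : ℕ → Finset V, TARSeqFun G k ρ r A B

section Aux

variable {V : Type*} [DecidableEq V]

lemma isIndep_subset {G : SimpleGraph V} {A B : Finset V} (h : IsIndep G A) (hBA : B ⊆ A) :
    IsIndep G B := fun u hu v hv => h u (hBA hu) v (hBA hv)

lemma tjAdj_symm {A B : Finset V} (h : TJAdj A B) : TJAdj B A :=
  ⟨h.1.symm, h.2.2, h.2.1⟩

lemma tjAdj_swap {C : Finset V} {u v : V} (hu : u ∈ C) (hv : v ∉ C) :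
    TJAdj C (insert v (C.erase u)) := by
  have hvu : v ≠ u := fun h => hv (h ▸ hu)
  have hvC : v ∉ C.erase u := fun h => hv (Finset.mem_of_mem_erase h)
  have h1 : C \ insert v (C.erase u) = {u} := by
    ext x
    simp only [Finset.mem_sdiff, Finset.mem_insert, Finset.mem_erase, Finset.mem_singleton]
    constructor
    · rintro ⟨hxC, hx⟩
      by_contra hxu
      exact hx (Or.inr ⟨hxu, hxC⟩)
    · rintro rfl
      refine ⟨hu, ?_⟩
      rintro (rfl | ⟨h, _⟩)
      · exact hv hu
      · exact h rfl
  have h2 : insert v (C.erase u) \ C = {v} := by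
    ext x
    simp only [Finset.mem_sdiff, Finset.mem_insert, Finset.mem_erase, Finset.mem_singleton]
    constructor
    · rintro ⟨rfl | ⟨hxu, hxC⟩, hxC'⟩
      · rfl
      · exact absurd hxC hxC'
    · rintro rfl
      exact ⟨Or.inl rfl, hv⟩
  refine ⟨?_, by rw [h1]; simp, by rw [h2]; simp⟩
  rw [Finset.card_insert_of_notMem hvC, Finset.card_erase_of_mem hu]
  have : 1 ≤ C.card := Finset.card_pos.mpr ⟨u, hu⟩
  omega

lemma tjAdj_decomp {C D : Finset V} (h : TJAdj C D) :
    ∃ u v, u ∈ C ∧ v ∉ C ∧ v ∉ C.erase u ∧ D = insert v (C.erase u) := by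
  obtain ⟨hcard, h1, h2⟩ := h
  obtain ⟨u, hu⟩ := Finset.card_eq_one.mp h1
  obtain ⟨v, hv⟩ := Finset.card_eq_one.mp h2
  have hux : ∀ x, x ∈ C ∧ x ∉ D ↔ x = u := by
    intro x; rw [← Finset.mem_sdiff, hu, Finset.mem_singleton]
  have hvx : ∀ x, x ∈ D ∧ x ∉ C ↔ x = v := by
    intro x; rw [← Finset.mem_sdiff, hv, Finset.mem_singleton]
  have huC : u ∈ C := ((hux u).mpr rfl).1
  have huD : u ∉ D := ((hux u).mpr rfl).2
  have hvD : v ∈ D := ((hvx v).mpr rfl).1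
  have hvC : v ∉ C := ((hvx v).mpr rfl).2
  refine ⟨u, v, huC, hvC, fun hm => hvC (Finset.mem_of_mem_erase hm), ?_⟩
  ext x
  simp only [Finset.mem_insert, Finset.mem_erase]
  constructor
  · intro hx
    by_cases hxC : x ∈ C
    · right
      refine ⟨fun he => huD (he ▸ hx), hxC⟩
    · left
      exact (hvx x).mp ⟨hx, hxC⟩
  · rintro (rfl | ⟨hxu, hxC⟩)
    · exact hvD
    · by_contra hxD
      exact hxu ((hux x).mp ⟨hxC, hxD⟩)

lemma tj_cons {G : SimpleGraph V} {C D B : Finset V} {ℓ : ℕ}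
    (hadj : TJAdj C D) (hC : IsIndep G C) (h : TJSeq G D B ℓ) : TJSeq G C B (ℓ + 1) := by
  obtain ⟨σ, h0, hℓ, hI, hS⟩ := h
  refine ⟨fun n => if n = 0 then C else σ (n - 1), rfl, by simp [hℓ], ?_, ?_⟩
  · intro i hi
    match i with
    | 0 => simpa using hC
    | j + 1 =>
      simp only [Nat.succ_ne_zero, if_false, Nat.add_sub_cancel]
      exact hI j (by omega)
  · intro i hi
    match i with
    | 0 => simpa [h0] using hadj
    | j + 1 =>
      simp only [Nat.succ_ne_zero, if_false, Nat.add_sub_cancel]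
      exact hS j (by omega)

lemma tar_snoc {G : SimpleGraph V} {s r : ℕ} {A C D : Finset V}
    (h : TARSeq G s A C r) (hstep : TARStep C D) (hind : IsIndep G D)
    (hcard : s - 1 ≤ D.card) : TARSeq G s A D (r + 1) := by
  obtain ⟨σ, h0, hrC, hI, hS⟩ := h
  refine ⟨fun n => if n ≤ r then σ n else D, by simp [h0], by simp, ?_, ?_⟩
  · intro i hi
    by_cases hir : i ≤ r
    · simpa [hir] using hI i hir
    · have e : (fun n => if n ≤ r then σ n else D) i = D := by simp [hir]
      rw [e]
      exact ⟨hind, hcard⟩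
  · intro i hi
    by_cases hir : i + 1 ≤ r
    · have hir' : i ≤ r := by omega
      simp only [if_pos hir, if_pos hir']
      exact hS i (by omega)
    · have hieq : i = r := by omega
      subst hieq
      have e1 : (fun n => if n ≤ i then σ n else D) i = C := by simp [hrC]
      have e2 : (fun n => if n ≤ i then σ n else D) (i + 1) = D := by simp [hir]
      rw [e1, e2]
      exact hstep

lemma tj_to_tar {G : SimpleGraph V} {s : ℕ} :
    ∀ (ℓ : ℕ) (ρ : ℕ → Finset V), (∀ i ≤ ℓ, IsIndep G (ρ i)) →
      (∀ i < ℓ, TJAdj (ρ i) (ρ (i + 1))) → (ρ 0).card = s →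
      (ρ ℓ).card = s ∧ TARSeq G s (ρ 0) (ρ ℓ) (2 * ℓ) := by
  intro ℓ
  induction ℓ with
  | zero =>
    intro ρ hind _ h0
    refine ⟨h0, fun _ => ρ 0, rfl, rfl, fun i _ => ⟨hind 0 le_rfl, ?_⟩,
      fun i hi => absurd hi (by omega)⟩
    show s - 1 ≤ (ρ 0).card
    rw [h0]
    omega
  | succ ℓ IH =>
    intro ρ hind hstep h0
    obtain ⟨hcardℓ, hTAR⟩ := IH ρ (fun i hi => hind i (by omega)) (fun i hi => hstep i (by omega)) h0
    have hadj := hstep ℓ (by omega)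
    obtain ⟨u, v, hu, hvC, hvE, hD⟩ := tjAdj_decomp hadj
    have hmid : TARSeq G s (ρ 0) ((ρ ℓ).erase u) (2 * ℓ + 1) := by
      refine tar_snoc hTAR (Or.inr ⟨u, hu, rfl⟩)
        (isIndep_subset (hind ℓ (by omega)) (Finset.erase_subset _ _)) ?_
      rw [Finset.card_erase_of_mem hu, hcardℓ]
    have hcard1 : (ρ (ℓ + 1)).card = s := by rw [← hadj.1, hcardℓ]
    have hfin : TARSeq G s (ρ 0) (ρ (ℓ + 1)) (2 * ℓ + 1 + 1) :=
      tar_snoc hmid (Or.inl ⟨v, hvE, hD⟩) (hind (ℓ + 1) le_rfl) (by omega)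
    refine ⟨hcard1, ?_⟩
    have h2 : 2 * (ℓ + 1) = 2 * ℓ + 1 + 1 := by ring
    rw [h2]
    exact hfin

lemma tarSeqFun_shift {G : SimpleGraph V} {s r : ℕ} {ρ : ℕ → Finset V} {A B : Finset V}
    (h : TARSeqFun G s ρ (r + 1) A B) :
    TARSeqFun G s (fun n => ρ (n + 1)) r (ρ 1) B := by
  obtain ⟨h0, hr, hind, hstep⟩ := h
  exact ⟨rfl, hr, fun i hi => hind (i + 1) (by omega), fun i hi => hstep (i + 1) (by omega)⟩

lemma tar_to_tj {G : SimpleGraph V} {B : Finset V} {s : ℕ} (hBs : B.card = s) :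
    ∀ (r : ℕ) (C : Finset V) (ρ : ℕ → Finset V), TARSeqFun G s ρ r C B → s ≤ C.card →
      ∃ D ℓ, D ⊆ C ∧ D.card = s ∧ TJSeq G D B ℓ ∧ 2 * ℓ + (C.card - s) ≤ r := by
  intro r
  induction r using Nat.strong_induction_on with
  | _ r IH =>
  intro C ρ h hC
  cases r with
  | zero =>
    obtain ⟨h0, hrB, hall, _⟩ := h
    have hCB : C = B := h0.symm.trans hrB
    subst hCB
    refine ⟨C, 0, Finset.Subset.refl _, hBs, ⟨fun _ => C, rfl, rfl, ?_, fun i hi => absurd hi (by omega)⟩, by omega⟩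
    intro i _
    exact h0 ▸ (hall 0 (by omega)).1
  | succ r' =>
    obtain ⟨h0, hrB, hall, hstep⟩ := h
    have hCind : IsIndep G C := h0 ▸ (hall 0 (by omega)).1
    have hstep0 := hstep 0 (by omega)
    rw [h0] at hstep0
    have hshift : TARSeqFun G s (fun n => ρ (n + 1)) r' (ρ 1) B :=
      tarSeqFun_shift ⟨h0, hrB, hall, hstep⟩
    rcases hstep0 with ⟨v, hv, h1⟩ | ⟨u, hu, h1⟩
    · -- first step adds v
      have hC1 : s ≤ (ρ 1).card := by
        rw [h1, Finset.card_insert_of_notMem hv]; omega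
      obtain ⟨D, ℓ, hDsub, hDcard, hTJ, hbound⟩ := IH r' (by omega) (ρ 1) _ hshift hC1
      rw [h1] at hDsub
      have hcard1 : (ρ 1).card = C.card + 1 := by
        rw [h1, Finset.card_insert_of_notMem hv]
      rw [hcard1] at hbound
      by_cases hvD : v ∈ D
      · have hs1 : 1 ≤ s := by
          rw [← hDcard]; exact Finset.card_pos.mpr ⟨v, hvD⟩
        have hDC : D.erase v ⊆ C := by
          intro x hx
          rcases Finset.mem_insert.mp (hDsub (Finset.mem_of_mem_erase hx)) with he | hm
          · exact absurd he (Finset.ne_of_mem_erase hx)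
          · exact hm
        have hex : (C \ D).Nonempty := by
          by_contra hne
          have hsub : C ⊆ D.erase v := by
            intro x hx
            have hxD : x ∈ D := by
              by_contra hxD
              exact hne ⟨x, Finset.mem_sdiff.mpr ⟨hx, hxD⟩⟩
            exact Finset.mem_erase.mpr ⟨fun he => hv (he ▸ hx), hxD⟩
          have hle := Finset.card_le_card hsub
          rw [Finset.card_erase_of_mem hvD, hDcard] at hle
          omega
        obtain ⟨u, huCD⟩ := hex
        have huC : u ∈ C := (Finset.mem_sdiff.mp huCD).1
        have huD : u ∉ D := (Finset.mem_sdiff.mp huCD).2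
        have hsub' : insert u (D.erase v) ⊆ C := Finset.insert_subset huC hDC
        have hcard' : (insert u (D.erase v)).card = s := by
          rw [Finset.card_insert_of_notMem (fun hmem => huD (Finset.mem_of_mem_erase hmem)),
            Finset.card_erase_of_mem hvD, hDcard]
          omega
        have hadj : TJAdj (insert u (D.erase v)) D := tjAdj_symm (tjAdj_swap hvD huD)
        refine ⟨insert u (D.erase v), ℓ + 1, hsub', hcard',
          tj_cons hadj (isIndep_subset hCind hsub') hTJ, by omega⟩
      · have hDC : D ⊆ C := by
          intro x hx
          rcases Finset.mem_insert.mp (hDsub hx) with he | hm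
          · exact absurd (he ▸ hx) hvD
          · exact hm
        exact ⟨D, ℓ, hDC, hDcard, hTJ, by omega⟩
    · -- first step removes u
      have hCpos : 1 ≤ C.card := Finset.card_pos.mpr ⟨u, hu⟩
      rcases Nat.lt_or_ge s C.card with hlt | hge
      · have hC1 : s ≤ (ρ 1).card := by
          rw [h1, Finset.card_erase_of_mem hu]; omega
        obtain ⟨D, ℓ, hDsub, hDcard, hTJ, hbound⟩ := IH r' (by omega) (ρ 1) _ hshift hC1
        rw [h1] at hDsub
        rw [h1, Finset.card_erase_of_mem hu] at hbound
        exact ⟨D, ℓ, hDsub.trans (Finset.erase_subset _ _), hDcard, hTJ, by omega⟩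
      · have hCs : C.card = s := le_antisymm hge hC
        have hs1 : 1 ≤ s := hCs ▸ hCpos
        have hr1 : 1 ≤ r' := by
          by_contra hcon
          have hr0 : r' = 0 := by omega
          subst hr0
          have hcard := congrArg Finset.card (h1.symm.trans hrB)
          rw [Finset.card_erase_of_mem hu, hCs, hBs] at hcard
          omega
        obtain ⟨r'', rfl⟩ : ∃ r'', r' = r'' + 1 := ⟨r' - 1, by omega⟩
        have hshift2 : TARSeqFun G s (fun n => ρ (n + 2)) r'' (ρ 2) B :=
          tarSeqFun_shift hshift
        have hstep1 := hstep 1 (by omega)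
        rw [h1] at hstep1
        rcases hstep1 with ⟨v, hv1, h2⟩ | ⟨w, hw1, h2⟩
        · -- second step adds v
          by_cases hvu : v = u
          · subst hvu
            have hρ2 : ρ 2 = C := by rw [h2, Finset.insert_erase hu]
            obtain ⟨D, ℓ, hDsub, hDcard, hTJ, hbound⟩ :=
              IH r'' (by omega) (ρ 2) _ hshift2 (by rw [hρ2, hCs])
            rw [hρ2] at hDsub hbound
            exact ⟨D, ℓ, hDsub, hDcard, hTJ, by omega⟩
          · have hvC : v ∉ C := fun hvC => hv1 (Finset.mem_erase.mpr ⟨hvu, hvC⟩)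
            have hρ2card : (ρ 2).card = s := by
              rw [h2, Finset.card_insert_of_notMem hv1, Finset.card_erase_of_mem hu, hCs]
              omega
            obtain ⟨D, ℓ, hDsub, hDcard, hTJ, hbound⟩ :=
              IH r'' (by omega) (ρ 2) _ hshift2 (by rw [hρ2card])
            have hDeq : D = ρ 2 :=
              Finset.eq_of_subset_of_card_le hDsub (by rw [hρ2card, hDcard])
            subst hDeq
            have hadj : TJAdj C (ρ 2) := h2 ▸ tjAdj_swap hu hvC
            refine ⟨C, ℓ + 1, Finset.Subset.refl _, hCs, tj_cons hadj hCind hTJ, ?_⟩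
            rw [hρ2card] at hbound
            omega
        · -- second step removes w : contradiction
          exfalso
          have hcard2 := (hall 2 (by omega)).2
          rw [h2, Finset.card_erase_of_mem hw1, Finset.card_erase_of_mem hu, hCs] at hcard2
          have hw : 1 ≤ (C.erase u).card := Finset.card_pos.mpr ⟨w, hw1⟩
          rw [Finset.card_erase_of_mem hu, hCs] at hw
          omega

end Aux

/-- for TJ-reconfigurable independent sets `A`, `B` of size `s`, the minimum
length of a TAR(s)-reconfiguration sequence from `A` to `B` is exactly twice the minimum
length of a TJ-reconfiguration sequence from `A` to `B`. -/
theorem stmt9 {V : Type*} [DecidableEq V] [Fintype V] (G : SimpleGraph V)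
    (A B : Finset V) (s : ℕ) (hA : IsIndep G A) (hB : IsIndep G B)
    (hAs : A.card = s) (hBs : B.card = s)
    (hreconf : ∃ ℓ, TJSeq G A B ℓ) :
    sInf {r | TARSeq G s A B r} = 2 * sInf {ℓ | TJSeq G A B ℓ} := by
  obtain ⟨ℓ0, hℓ0⟩ := hreconf
  have hTJne : {ℓ | TJSeq G A B ℓ}.Nonempty := ⟨ℓ0, hℓ0⟩
  have hLmem : TJSeq G A B (sInf {ℓ | TJSeq G A B ℓ}) := Nat.sInf_mem hTJne
  obtain ⟨ρ, h0, hLB, hind, hstep⟩ := hLmem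
  have hupper : TARSeq G s A B (2 * sInf {ℓ | TJSeq G A B ℓ}) := by
    have h := tj_to_tar (sInf {ℓ | TJSeq G A B ℓ}) ρ hind hstep (by rw [h0, hAs])
    rw [h0, hLB] at h
    exact h.2
  have hTARne : {r | TARSeq G s A B r}.Nonempty := ⟨2 * sInf {ℓ | TJSeq G A B ℓ}, hupper⟩
  have hRmem : TARSeq G s A B (sInf {r | TARSeq G s A B r}) := Nat.sInf_mem hTARne
  obtain ⟨σ, hσ⟩ := hRmem
  obtain ⟨D, ℓ, hDsub, hDcard, hTJ, hbound⟩ := tar_to_tj hBs _ A σ hσ (le_of_eq hAs.symm)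
  have hDA : D = A := Finset.eq_of_subset_of_card_le hDsub (by rw [hAs, hDcard])
  rw [hDA] at hTJ
  have hLle : sInf {ℓ | TJSeq G A B ℓ} ≤ ℓ := Nat.sInf_le hTJ
  have h1 : sInf {r | TARSeq G s A B r} ≤ 2 * sInf {ℓ | TJSeq G A B ℓ} := Nat.sInf_le hupper
  rw [hAs] at hbound
  omega
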